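/- For all r > 0 and all θ₁,θ₂ ∈ (0,π), the sum of first components weighted by logarithms of the facet pairings satisfies Σ_{A=1}^{4} v_A¹ · log⟨v_A, y(r,θ₁,θ₂)⟩ = 8 log r + 2 log sin θ₁ + 2 log sin θ₂ − 4 log 2 − 4 log 3, where v_A¹ denotes the first component of v_A (which equals 1 for each A). -/
import Mathlib


open Real

/-- The momentum map of the conifold `C(T^{1,1})` in the basis adapted to the toric data. -/
noncomputable def momentumMap (r θ₁ θ₂ : ℝ) : Fin 3 → ℝ :=
  ![r ^ 2 / 6 * (Real.cos θ₁ + 1), r ^ 2 / 6 * (Real.cos θ₂ - Real.cos θ₁),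
    -(r ^ 2 / 6) * (Real.cos θ₁ + Real.cos θ₂)]

/-- The standard inner product on `ℝ³`. -/
def dot3 (v w : Fin 3 → ℝ) : ℝ := ∑ i, v i * w i

/-- The inward normal vectors `v₁=(1,1,1), v₂=(1,0,1), v₃=(1,0,0), v₄=(1,1,0)` of the
moment cone of the conifold. -/
def toricNormal : Fin 4 → (Fin 3 → ℝ) := ![![1, 1, 1], ![1, 0, 1], ![1, 0, 0], ![1, 1, 0]]

lemma cos_bounds {θ : ℝ} (h : θ ∈ Set.Ioo 0 π) :
    -1 < Real.cos θ ∧ Real.cos θ < 1 := by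
  have hs : 0 < Real.sin θ := Real.sin_pos_of_pos_of_lt_pi h.1 h.2
  have h1 : Real.sin θ ^ 2 + Real.cos θ ^ 2 = 1 := Real.sin_sq_add_cos_sq θ
  have h2 : Real.cos θ ^ 2 < 1 := by nlinarith
  constructor <;> nlinarith

lemma log_helper {r c : ℝ} (hr : 0 < r) (hc : 0 < c) :
    Real.log (r ^ 2 / 6 * c) =
      2 * Real.log r - Real.log 2 - Real.log 3 + Real.log c := by
  rw [Real.log_mul (by positivity) (ne_of_gt hc), Real.log_div (by positivity) (by norm_num),
    Real.log_pow, show (6 : ℝ) = 2 * 3 by norm_num, Real.log_mul (by norm_num) (by norm_num)]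
  push_cast; ring

/-- for `r > 0` and `θ₁,θ₂ ∈ (0,π)`,
`Σ_A v_A¹ log⟨v_A, y⟩ = 8 log r + 2 log sin θ₁ + 2 log sin θ₂ − 4 log 2 − 4 log 3`. -/
theorem sum_first_components_log_pairings (r θ₁ θ₂ : ℝ) (hr : 0 < r)
    (h₁ : θ₁ ∈ Set.Ioo 0 π) (h₂ : θ₂ ∈ Set.Ioo 0 π) :
    ∑ A : Fin 4, toricNormal A 0 * Real.log (dot3 (toricNormal A) (momentumMap r θ₁ θ₂)) =
      8 * Real.log r + 2 * Real.log (Real.sin θ₁) + 2 * Real.log (Real.sin θ₂)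
        - 4 * Real.log 2 - 4 * Real.log 3 := by
  obtain ⟨hc1l, hc1u⟩ := cos_bounds h₁
  obtain ⟨hc2l, hc2u⟩ := cos_bounds h₂
  have hs1 : 0 < Real.sin θ₁ := Real.sin_pos_of_pos_of_lt_pi h₁.1 h₁.2
  have hs2 : 0 < Real.sin θ₂ := Real.sin_pos_of_pos_of_lt_pi h₂.1 h₂.2
  have key1 : Real.log (1 - Real.cos θ₁) + Real.log (1 + Real.cos θ₁)
      = 2 * Real.log (Real.sin θ₁) := by
    rw [← Real.log_mul (by linarith) (by linarith)]
    have : (1 - Real.cos θ₁) * (1 + Real.cos θ₁) = Real.sin θ₁ ^ 2 := by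
      have := Real.sin_sq_add_cos_sq θ₁; nlinarith
    rw [this, Real.log_pow]; push_cast; ring
  have key2 : Real.log (1 - Real.cos θ₂) + Real.log (1 + Real.cos θ₂)
      = 2 * Real.log (Real.sin θ₂) := by
    rw [← Real.log_mul (by linarith) (by linarith)]
    have : (1 - Real.cos θ₂) * (1 + Real.cos θ₂) = Real.sin θ₂ ^ 2 := by
      have := Real.sin_sq_add_cos_sq θ₂; nlinarith
    rw [this, Real.log_pow]; push_cast; ring
  simp only [Fin.sum_univ_four, dot3, toricNormal, momentumMap, Fin.sum_univ_three,
    Matrix.cons_val_zero, Matrix.cons_val_one, Matrix.head_cons, Matrix.cons_val_two,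
    Matrix.tail_cons, Matrix.cons_val_three]
  have e1 : (1:ℝ) * (r ^ 2 / 6 * (Real.cos θ₁ + 1)) +
      1 * (r ^ 2 / 6 * (Real.cos θ₂ - Real.cos θ₁)) +
      1 * (-(r ^ 2 / 6) * (Real.cos θ₁ + Real.cos θ₂)) = r ^ 2 / 6 * (1 - Real.cos θ₁) := by ring
  have e2 : (1:ℝ) * (r ^ 2 / 6 * (Real.cos θ₁ + 1)) +
      0 * (r ^ 2 / 6 * (Real.cos θ₂ - Real.cos θ₁)) +
      1 * (-(r ^ 2 / 6) * (Real.cos θ₁ + Real.cos θ₂)) = r ^ 2 / 6 * (1 - Real.cos θ₂) := by ring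
  have e3 : (1:ℝ) * (r ^ 2 / 6 * (Real.cos θ₁ + 1)) +
      0 * (r ^ 2 / 6 * (Real.cos θ₂ - Real.cos θ₁)) +
      0 * (-(r ^ 2 / 6) * (Real.cos θ₁ + Real.cos θ₂)) = r ^ 2 / 6 * (1 + Real.cos θ₁) := by ring
  have e4 : (1:ℝ) * (r ^ 2 / 6 * (Real.cos θ₁ + 1)) +
      1 * (r ^ 2 / 6 * (Real.cos θ₂ - Real.cos θ₁)) +
      0 * (-(r ^ 2 / 6) * (Real.cos θ₁ + Real.cos θ₂)) = r ^ 2 / 6 * (1 + Real.cos θ₂) := by ring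
  rw [e1, e2, e3, e4, log_helper hr (by linarith), log_helper hr (by linarith),
    log_helper hr (by linarith), log_helper hr (by linarith)]
  linarith [key1, key2]
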